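/- For every strict total order r on Fin n, the incidence vector χ_r is an extreme point of the linear ordering polytope relaxation B_n (viewed as a convex subset of matrices Fin n → Fin n → ℝ). Thus every feasible solution of the linear ordering problem gives an integer vertex of B_n. -/

import Mathlib

open scoped BigOperators

/-- A point of the linear ordering polytope relaxation `B_n`. -/
def IsBn {n : ℕ} (x : Fin n → Fin n → ℝ) : Prop :=
  (∀ i, x i i = 0) ∧
  (∀ i j : Fin n, i ≠ j → 0 ≤ x i j ∧ x i j ≤ 1) ∧
  (∀ i j : Fin n, i ≠ j → x i j + x j i = 1) ∧
  (∀ i j k : Fin n, i ≠ j → i ≠ k → j ≠ k →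
    0 ≤ x i j + x j k - x i k ∧ x i j + x j k - x i k ≤ 1)

/-- A strict total order on `Fin n`: irreflexive, transitive and total. -/
def IsSTO {n : ℕ} (r : Fin n → Fin n → Prop) : Prop :=
  (∀ i, ¬ r i i) ∧ (∀ i j k, r i j → r j k → r i k) ∧
  (∀ i j : Fin n, i ≠ j → r i j ∨ r j i)

open Classical in
/-- The incidence vector `χ_r` of a relation `r`. -/
noncomputable def chi {n : ℕ} (r : Fin n → Fin n → Prop) : Fin n → Fin n → ℝ :=
  fun i j => if r i j then 1 else 0

lemma chi_mem_Bn {n : ℕ} (r : Fin n → Fin n → Prop) (hr : IsSTO r) :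
    IsBn (chi r) := by
  classical
  obtain ⟨hirr, htrans, htot⟩ := hr
  have hasym : ∀ i j, r i j → ¬ r j i := fun i j h h' => hirr i (htrans i j i h h')
  refine ⟨fun i => ?_, fun i j hij => ?_, fun i j hij => ?_, fun i j k hij hik hjk => ?_⟩
  · simp [chi, hirr i]
  · unfold chi; split <;> norm_num
  · unfold chi
    rcases htot i j hij with h | h
    · simp [h, hasym i j h]
    · simp [h, hasym j i h]
  · unfold chi
    by_cases h1 : r i j <;> by_cases h2 : r j k <;> by_cases h3 : r i k <;>
        simp [h1, h2, h3]
    · exact ((h3 (htrans i j k h1 h2)) : False).elim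
    · exact ((hirr i (htrans i k i h3 (htrans k j i
        ((htot j k hjk).resolve_left h2) ((htot i j hij).resolve_left h1)))) : False).elim

theorem incidence_extremePoint_Bn {n : ℕ} (r : Fin n → Fin n → Prop)
    (hr : IsSTO r) :
    chi r ∈ Set.extremePoints ℝ {x : Fin n → Fin n → ℝ | IsBn x} := by
  classical
  refine ⟨chi_mem_Bn r hr, ?_⟩
  rintro x₁ hx₁ x₂ hx₂ ⟨a, b, ha, hb, hab, hsum⟩
  obtain ⟨hd₁, hb₁, -, -⟩ := hx₁
  obtain ⟨hd₂, hb₂, -, -⟩ := hx₂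
  have key : ∀ i j, x₁ i j = chi r i j ∧ x₂ i j = chi r i j := by
    intro i j
    have h : a * x₁ i j + b * x₂ i j = chi r i j := by
      have := congrFun (congrFun hsum i) j
      simpa using this
    by_cases hij : i = j
    · subst hij
      have : chi r i i = 0 := by simp [chi, hr.1 i]
      rw [this] at h ⊢
      constructor <;> [exact hd₁ i; exact hd₂ i]
    · obtain ⟨h1l, h1u⟩ := hb₁ i j hij
      obtain ⟨h2l, h2u⟩ := hb₂ i j hij
      by_cases hrij : r i j
      · have hc : chi r i j = 1 := by simp [chi, hrij]
        rw [hc] at h ⊢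
        constructor <;> nlinarith
      · have hc : chi r i j = 0 := by simp [chi, hrij]
        rw [hc] at h ⊢
        constructor <;> nlinarith
  funext i j
  · exact (key i j).1
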